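/- BFS spanning-tree distance correctness: Let G = (V, E) be a finite directed graph, u ∈ V, and suppose every vertex is reachable from u. Define dist_0(u) = 0 and dist_0(v) = ⊥ (undefined, encoded as -1) for v ≠ u. In each round, simultaneously: every vertex t with dist = ⊥ that has some in-edge (s, t) with dist(s) ≠ ⊥ receives dist(t) = dist(s') + 1 where (s', t) is some (arbitrarily chosen) such edge. Then: (1) after round i, a vertex v satisfies dist(v) ≠ ⊥ if and only if the shortest-path distance d(u, v) ≤ i; (2) whenever dist(v) ≠ ⊥, dist(v) = d(u, v); (3) the process stabilizes after exactly ecc(u) rounds, where ecc(u) = max_v d(u, v). -/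
import Mathlib


/-- `reachN E u k v`: there is a directed walk of length `k` from `u` to `v`. -/
def reachN {V : Type*} (E : V → V → Prop) (u : V) : ℕ → V → Prop
  | 0, v => v = u
  | k + 1, v => ∃ w, reachN E u k w ∧ E w v

/-- BFS spanning-tree distance correctness: with `d` the shortest directed-path distance
from `u` (all vertices reachable), the rounds of the frontier process satisfy:
(1) `dist i v ≠ -1` iff `d v ≤ i`; (2) a defined `dist` equals the true distance;
(3) the process is stable at round `i` iff `i ≥ ecc u`. -/
theorem bfs_distance_correct
    (V : Type*) [Fintype V] (E : V → V → Prop) (u : V)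
    (d : V → ℕ)
    (hd : ∀ v, d v = sInf {k : ℕ | reachN E u k v})
    (hreach : ∀ v, ∃ k, reachN E u k v)
    (dist : ℕ → V → ℤ)
    (h0u : dist 0 u = 0)
    (h0 : ∀ v, v ≠ u → dist 0 v = -1)
    (hkeep : ∀ i v, dist i v ≠ -1 → dist (i + 1) v = dist i v)
    (hupd : ∀ i v, dist i v = -1 → (∃ s, E s v ∧ dist i s ≠ -1) →
      ∃ s', E s' v ∧ dist i s' ≠ -1 ∧ dist (i + 1) v = dist i s' + 1)
    (hstay : ∀ i v, dist i v = -1 → (¬ ∃ s, E s v ∧ dist i s ≠ -1) →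
      dist (i + 1) v = -1) :
    (∀ i v, dist i v ≠ -1 ↔ d v ≤ i) ∧
    (∀ i v, dist i v ≠ -1 → dist i v = (d v : ℤ)) ∧
    (∀ i, (∀ v, dist (i + 1) v = dist i v) ↔ Finset.univ.sup d ≤ i) := by
  have hdr : ∀ v, reachN E u (d v) v := by
    intro v; rw [hd v]; exact Nat.sInf_mem (hreach v)
  have hdle : ∀ v k, reachN E u k v → d v ≤ k := by
    intro v k hk; rw [hd v]; exact Nat.sInf_le hk
  have hdu : d u = 0 := Nat.le_zero.mp (hdle u 0 rfl)
  have hzero : ∀ v, d v = 0 → v = u := by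
    intro v h
    have h2 := hdr v
    rw [h] at h2
    simpa [reachN] using h2
  have hpred : ∀ v m, d v = m + 1 → ∃ w, E w v ∧ d w = m := by
    intro v m hv
    have h := hdr v
    rw [hv] at h
    obtain ⟨w, hw, hwv⟩ := h
    have h1 : d w ≤ m := hdle w m hw
    have h2 : d v ≤ d w + 1 := hdle v (d w + 1) ⟨w, hdr w, hwv⟩
    exact ⟨w, hwv, by omega⟩
  have key : ∀ i v, (dist i v ≠ -1 ↔ d v ≤ i) ∧ (dist i v ≠ -1 → dist i v = (d v : ℤ)) := by
    intro i
    induction i with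
    | zero =>
      intro v
      by_cases hv : v = u
      · subst hv; simp [h0u, hdu]
      · have h1 : dist 0 v = -1 := h0 v hv
        have h2 : ¬ d v ≤ 0 := fun h => hv (hzero v (Nat.le_zero.mp h))
        simp [h1, h2]
    | succ i ih =>
      intro v
      by_cases h1 : dist i v = -1
      · have hnle : ¬ d v ≤ i := fun h => ((ih v).1.mpr h) h1
        by_cases h2 : ∃ s, E s v ∧ dist i s ≠ -1
        · obtain ⟨s', hs'v, hs'ne, heq⟩ := hupd i v h1 h2
          have hds' : d s' ≤ i := (ih s').1.mp hs'ne
          have hvle : d v ≤ d s' + 1 := hdle v (d s' + 1) ⟨s', hdr s', hs'v⟩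
          have hval : dist i s' = (d s' : ℤ) := (ih s').2 hs'ne
          have hdv : d v ≤ i + 1 := by omega
          have hne : dist (i + 1) v ≠ -1 := by
            rw [heq, hval]
            have : (0 : ℤ) ≤ (d s' : ℤ) := Int.natCast_nonneg _
            omega
          refine ⟨⟨fun _ => hdv, fun _ => hne⟩, fun _ => ?_⟩
          rw [heq, hval]
          have : d s' + 1 = d v := by omega
          exact_mod_cast congrArg (Nat.cast : ℕ → ℤ) this
        · have h3 : dist (i + 1) v = -1 := hstay i v h1 h2
          have h4 : ¬ d v ≤ i + 1 := by
            intro h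
            have hdv : d v = i + 1 := by omega
            obtain ⟨w, hwv, hw⟩ := hpred v i hdv
            exact h2 ⟨w, hwv, (ih w).1.mpr (le_of_eq hw)⟩
          simp [h3, h4]
      · have h3 : dist (i + 1) v = dist i v := hkeep i v h1
        have h4 : d v ≤ i := (ih v).1.mp h1
        rw [h3]
        exact ⟨⟨fun _ => Nat.le_succ_of_le h4, fun _ => h1⟩, (ih v).2⟩
  refine ⟨fun i v => (key i v).1, fun i v => (key i v).2, fun i => ?_⟩
  constructor
  · intro hst
    by_contra hsup
    rw [Finset.sup_le_iff] at hsup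
    push_neg at hsup
    obtain ⟨v, -, hv⟩ := hsup
    have hex : ∀ m v, d v = i + 1 + m → ∃ w, d w = i + 1 := by
      intro m
      induction m with
      | zero => exact fun v h => ⟨v, h⟩
      | succ m ihm =>
        intro v h
        obtain ⟨w, -, hw⟩ := hpred v (i + 1 + m) (by omega)
        exact ihm w hw
    obtain ⟨w, hw⟩ := hex (d v - (i + 1)) v (by omega)
    obtain ⟨s, hsw, hds⟩ := hpred w i hw
    have h1 : dist i w = -1 := by
      by_contra h
      have := (key i w).1.mp h
      omega
    have hs : dist i s ≠ -1 := (key i s).1.mpr (le_of_eq hds)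
    obtain ⟨s', _, hs', heq⟩ := hupd i w h1 ⟨s, hsw, hs⟩
    have hval : dist i s' = (d s' : ℤ) := (key i s').2 hs'
    have hstw := hst w
    rw [heq, hval, h1] at hstw
    have : (0 : ℤ) ≤ (d s' : ℤ) := Int.natCast_nonneg _
    omega
  · intro hsup v
    have : d v ≤ i := le_trans (Finset.le_sup (Finset.mem_univ v)) hsup
    exact hkeep i v ((key i v).1.mpr this)
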